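/- Let (K, t, c, λ) be a weak mixed distributive law in Cat, with splitting (a, π, σ) of the canonical idempotent on tc, action α = π ∘ (μ c) ∘ (t σ) and coaction γ = (c π) ∘ (λ c) ∘ (t δ) ∘ σ. Then (a, α, γ) is a mixed algebra: γ ∘ α = (c ◁ α) ∘ (λ ▷ a) ∘ (t ◁ γ). -/
import Mathlib


open CategoryTheory

universe v₁ u₁ v₂ u₂

variable {K : Type u₁} [Category.{v₁} K]

/-- A weak mixed distributive law `λ : tc ⟶ ct` between a monad `t` and a comonad `c`
on a category `K`, satisfying the four axioms of Böhm–Lack–Street, stated componentwise. -/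
structure WeakMixedDistLaw (t : CategoryTheory.Monad K) (c : CategoryTheory.Comonad K) where
  l : (c.toFunctor ⋙ t.toFunctor) ⟶ (t.toFunctor ⋙ c.toFunctor)
  mul_compat : ∀ X : K, t.μ.app (c.obj X) ≫ l.app X =
    t.map (l.app X) ≫ l.app (t.obj X) ≫ c.map (t.μ.app X)
  comul_compat : ∀ X : K, t.map (c.δ.app X) ≫ l.app (c.obj X) ≫ c.map (l.app X) =
    l.app X ≫ c.δ.app (t.obj X)
  weak_unit : ∀ X : K, t.η.app (c.obj X) ≫ l.app X =
    c.δ.app X ≫ c.map (t.η.app (c.obj X)) ≫ c.map (l.app X) ≫ c.map (c.ε.app (t.obj X))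
  weak_counit : ∀ X : K, l.app X ≫ c.ε.app (t.obj X) =
    t.map (t.η.app (c.obj X)) ≫ t.map (l.app X) ≫ t.map (c.ε.app (t.obj X)) ≫ t.μ.app X

namespace WMDLaux

variable (t : CategoryTheory.Monad K) (c : CategoryTheory.Comonad K) (W : WeakMixedDistLaw t c)

/-- ρ ≫ cρ = ρ ≫ δ -/
lemma rho_comul (X : K) :
    (t.map (c.δ.app X) ≫ W.l.app (c.obj X)) ≫
      c.map (t.map (c.δ.app X) ≫ W.l.app (c.obj X)) =
    (t.map (c.δ.app X) ≫ W.l.app (c.obj X)) ≫ c.δ.app (t.obj (c.obj X)) := by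
  have nat := W.l.naturality (c.δ.app X)
  simp only [Functor.comp_map, Functor.comp_obj] at nat
  rw [c.toFunctor.map_comp, Category.assoc]
  slice_lhs 2 3 => rw [← nat]
  slice_lhs 1 2 => rw [← t.toFunctor.map_comp, c.coassoc, t.toFunctor.map_comp]
  simp only [Functor.comp_obj]
  rw [Category.assoc, Category.assoc, W.comul_compat (c.obj X)]
  simp


/-- Θ ≫ ρ = ρ -/
lemma theta_rho (X : K) :
    (t.map (c.δ.app X) ≫ W.l.app (c.obj X) ≫ c.ε.app (t.obj (c.obj X))) ≫
      (t.map (c.δ.app X) ≫ W.l.app (c.obj X)) =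
    t.map (c.δ.app X) ≫ W.l.app (c.obj X) := by
  have nat := c.ε.naturality (t.map (c.δ.app X) ≫ W.l.app (c.obj X))
  simp only [Functor.id_obj, Functor.id_map] at nat
  simp only [Category.assoc]
  rw [← nat, reassoc_of% (rho_comul t c W X)]
  simp

/-- ρ ≫ cΘ = ρ -/
lemma rho_ctheta (X : K) :
    (t.map (c.δ.app X) ≫ W.l.app (c.obj X)) ≫
      c.map (t.map (c.δ.app X) ≫ W.l.app (c.obj X) ≫ c.ε.app (t.obj (c.obj X))) =
    t.map (c.δ.app X) ≫ W.l.app (c.obj X) := by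
  rw [show t.map (c.δ.app X) ≫ W.l.app (c.obj X) ≫ c.ε.app (t.obj (c.obj X)) =
      (t.map (c.δ.app X) ≫ W.l.app (c.obj X)) ≫ c.ε.app (t.obj (c.obj X)) by simp,
    c.toFunctor.map_comp, ← Category.assoc, rho_comul t c W X]
  simp

/-- ψ ≫ ctΘ = ψ -/
lemma psi_abs (X : K) :
    t.map (t.map (c.δ.app X) ≫ W.l.app (c.obj X)) ≫ W.l.app (t.obj (c.obj X)) ≫
      c.map (t.map (t.map (c.δ.app X) ≫ W.l.app (c.obj X) ≫ c.ε.app (t.obj (c.obj X)))) =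
    t.map (t.map (c.δ.app X) ≫ W.l.app (c.obj X)) ≫ W.l.app (t.obj (c.obj X)) := by
  have key := (W.l.naturality
    (t.map (c.δ.app X) ≫ W.l.app (c.obj X) ≫ c.ε.app (t.obj (c.obj X)))).symm
  simp only [Functor.comp_map, Functor.comp_obj, Functor.id_obj] at key
  rw [key, ← Category.assoc, ← t.toFunctor.map_comp, rho_ctheta t c W X]

/-- μ ≫ ρ = tρ ≫ λ ≫ cμ -/
lemma mu_rho (X : K) :
    t.μ.app (c.obj X) ≫ t.map (c.δ.app X) ≫ W.l.app (c.obj X) =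
    t.map (t.map (c.δ.app X) ≫ W.l.app (c.obj X)) ≫ W.l.app (t.obj (c.obj X)) ≫
      c.map (t.μ.app (c.obj X)) := by
  have nat := t.μ.naturality (c.δ.app X)
  simp only [Functor.comp_map, Functor.comp_obj] at nat
  rw [← Category.assoc, ← nat, Category.assoc, W.mul_compat (c.obj X)]
  simp only [Functor.map_comp, Category.assoc]

end WMDLaux

/-- The canonical action and coaction on the splitting a of the canonical idempotent
make a into a mixed algebra: γ ∘ α = (c α) ∘ (λ a) ∘ (t γ). -/
theorem canonical_mixed_algebra (t : CategoryTheory.Monad K) (c : CategoryTheory.Comonad K)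
    (W : WeakMixedDistLaw t c) (a : K ⥤ K) (π : (c.toFunctor ⋙ t.toFunctor) ⟶ a) (σ : a ⟶ (c.toFunctor ⋙ t.toFunctor))
    (hsec : σ ≫ π = 𝟙 a)
    (hsplit : ∀ X : K, π.app X ≫ σ.app X =
      t.map (c.δ.app X) ≫ W.l.app (c.obj X) ≫ c.ε.app (t.obj (c.obj X))) :
    ∀ X : K,
      (t.map (σ.app X) ≫ t.μ.app (c.obj X) ≫ π.app X) ≫
        (σ.app X ≫ t.map (c.δ.app X) ≫ W.l.app (c.obj X) ≫ c.map (π.app X)) =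
      t.map (σ.app X ≫ t.map (c.δ.app X) ≫ W.l.app (c.obj X) ≫ c.map (π.app X)) ≫
        W.l.app (a.obj X) ≫
        c.map (t.map (σ.app X) ≫ t.μ.app (c.obj X) ≫ π.app X) := by
  intro X
  simp only [Category.assoc]
  rw [reassoc_of% (hsplit X)]
  rw [reassoc_of% (WMDLaux.theta_rho t c W X)]
  rw [reassoc_of% (WMDLaux.mu_rho t c W X)]
  have natπ := W.l.naturality (π.app X)
  simp only [Functor.comp_map, Functor.comp_obj] at natπ
  simp only [Functor.map_comp, Category.assoc]
  rw [reassoc_of% natπ]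
  have comb : c.map (t.map (π.app X)) ≫ c.map (t.map (σ.app X)) =
      c.map (t.map (π.app X ≫ σ.app X)) := by
    rw [t.toFunctor.map_comp, c.toFunctor.map_comp]
  rw [hsplit X] at comb
  rw [reassoc_of% comb]
  have hD2 := reassoc_of% (WMDLaux.psi_abs t c W X)
  simp only [Functor.map_comp, Category.assoc] at hD2 ⊢
  rw [hD2]
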